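/- Let U ⊆ ℂ be a nonempty open connected set and F, G holomorphic functions on U with |F'(z)| < |G'(z)| for all z ∈ U (so the affine metric h = (|G'|² − |F'|²)|dz|² of the associated improper affine sphere is positive definite), and suppose h is complete. Then F'/G' is constant. (This is the analytic content of the parametric affine Bernstein theorem: any affine complete improper affine sphere in ℝ³ is an elliptic paraboloid.) -/

import Mathlib

set_option maxHeartbeats 1000000

open Metric Set Filter MeasureTheory
open scoped Topology


noncomputable section

/-- The length of a curve `γ : [0,1) → ℂ` in the conformal metric `lam(z)²|dz|²`. -/
noncomputable def curveLength (lam : ℂ → ℝ) (γ : ℝ → ℂ) : ENNReal :=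
  ∫⁻ t in Set.Ioo (0:ℝ) 1, ENNReal.ofReal (lam (γ t) * ‖deriv γ t‖)

/-- `γ` is piecewise C¹ on `[0,1)`: continuous, and differentiable off a countable set. -/
def PiecewiseC1 (γ : ℝ → ℂ) : Prop :=
  ContinuousOn γ (Set.Ico 0 1) ∧
    ∃ s : Set ℝ, s.Countable ∧ ∀ t ∈ Set.Ico (0:ℝ) 1 \ s, DifferentiableAt ℝ γ t

/-- A divergent curve in `U`, parametrized on `[0,1)`: a piecewise C¹ curve in `U` that
eventually leaves every compact subset of `U`. -/
def DivergentCurve (U : Set ℂ) (γ : ℝ → ℂ) : Prop :=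
  PiecewiseC1 γ ∧ (∀ t ∈ Set.Ico (0:ℝ) 1, γ t ∈ U) ∧
    ∀ K : Set ℂ, K ⊆ U → IsCompact K →
      ∃ t₀ ∈ Set.Ico (0:ℝ) 1, ∀ t, t₀ ≤ t → t < 1 → γ t ∉ K

/-- The conformal metric `lam²|dz|²` on `U` is complete: every divergent curve has
infinite length. -/
def MetricComplete (U : Set ℂ) (lam : ℂ → ℝ) : Prop :=
  ∀ γ : ℝ → ℂ, DivergentCurve U γ → curveLength lam γ = ⊤

/-- Geodesic distance from `p` to the boundary of `U` w.r.t. `lam²|dz|²`: the infimum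
of the lengths of divergent curves emanating from `p`. -/
noncomputable def geoDist (U : Set ℂ) (lam : ℂ → ℝ) (p : ℂ) : ENNReal :=
  ⨅ (γ : ℝ → ℂ) (_ : DivergentCurve U γ ∧ γ 0 = p), curveLength lam γ


section Helpers

variable {R : ℝ} {c : ℂ}

/-- radial projection onto the sphere of radius `R` around `c`. -/
def sphProj (c : ℂ) (R : ℝ) (z : ℂ) : ℂ := c + (R / dist z c) • (z - c)

lemma sphProj_mem (hR : 0 < R) {z : ℂ} (hz : R ≤ dist z c) : sphProj c R z ∈ sphere c R := by
  have hd : 0 < dist z c := hR.trans_le hz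
  have hz0 : z - c ≠ 0 := by
    rw [sub_ne_zero]
    intro h; rw [h] at hd; simp at hd
  rw [mem_sphere, sphProj, dist_eq_norm]
  rw [add_sub_cancel_left, norm_smul, Real.norm_eq_abs, abs_of_nonneg (by positivity),
    ← dist_eq_norm]
  field_simp

lemma sphProj_dist (hR : 0 < R) {z : ℂ} (hz : R ≤ dist z c) :
    dist z (sphProj c R z) = dist z c - R := by
  have hd : 0 < dist z c := hR.trans_le hz
  have key : z - sphProj c R z = (1 - R / dist z c) • (z - c) := by
    rw [sphProj]; module
  rw [dist_eq_norm, key, norm_smul, Real.norm_eq_abs,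
    abs_of_nonneg (by rw [sub_nonneg]; exact div_le_one_of_le₀ hz hd.le), ← dist_eq_norm]
  field_simp

lemma sphProj_lipschitz (hR : 0 < R) {a b : ℂ} (ha : R ≤ dist a c) (hb : R ≤ dist b c) :
    dist (sphProj c R a) (sphProj c R b) ≤ 2 * dist a b := by
  have hda : 0 < dist a c := hR.trans_le ha
  have hdb : 0 < dist b c := hR.trans_le hb
  set da := dist a c with hdadef
  set db := dist b c with hdbdef
  have hna : da = ‖a - c‖ := by rw [hdadef, dist_eq_norm]
  have hnb : db = ‖b - c‖ := by rw [hdbdef, dist_eq_norm]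
  have key : sphProj c R a - sphProj c R b
      = (R / da) • ((a - c) - (b - c)) + (R / da - R / db) • (b - c) := by
    rw [sphProj, sphProj, ← hdadef, ← hdbdef]; module
  rw [dist_eq_norm, key]
  have habn : (a - c) - (b - c) = a - b := by ring
  have h1 : ‖(R / da) • ((a - c) - (b - c))‖ ≤ 1 * ‖a - b‖ := by
    rw [norm_smul, Real.norm_eq_abs, abs_of_nonneg (by positivity), habn]
    apply mul_le_mul_of_nonneg_right _ (norm_nonneg _)
    rw [div_le_one hda]
    exact ha
  have hdiff : |db - da| ≤ ‖a - b‖ := by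
    rw [hna, hnb]
    calc |‖b - c‖ - ‖a - c‖| ≤ ‖(b - c) - (a - c)‖ := abs_norm_sub_norm_le _ _
      _ = ‖a - b‖ := by rw [show (b - c) - (a - c) = -(a - b) by ring, norm_neg]
  have heq : R / da - R / db = R * (db - da) / (da * db) := by
    field_simp
  have habs : |R / da - R / db| * db ≤ ‖a - b‖ := by
    rw [heq, abs_div, abs_mul, abs_of_nonneg hR.le, abs_of_nonneg (mul_pos hda hdb).le]
    rw [div_mul_eq_mul_div, div_le_iff₀ (mul_pos hda hdb)]
    have hmm : R * |db - da| ≤ da * ‖a - b‖ := mul_le_mul ha hdiff (abs_nonneg _) hda.le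
    nlinarith [hmm, hdb.le, abs_nonneg (db - da), norm_nonneg (a - b)]
  have h2 : ‖(R / da - R / db) • (b - c)‖ ≤ 1 * ‖a - b‖ := by
    rw [norm_smul, Real.norm_eq_abs, ← hnb, one_mul]
    exact habs
  calc ‖(R / da) • ((a - c) - (b - c)) + (R / da - R / db) • (b - c)‖
      ≤ ‖(R / da) • ((a - c) - (b - c))‖ + ‖(R / da - R / db) • (b - c)‖ := norm_add_le _ _
    _ ≤ 1 * ‖a - b‖ + 1 * ‖a - b‖ := add_le_add h1 h2
    _ = 2 * dist a b := by rw [dist_eq_norm]; ring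

end Helpers

/-- Local holomorphic inverse of `G` near a point `q ∈ U` where `deriv G q ≠ 0`. -/
lemma localInv (U : Set ℂ) (hUo : IsOpen U) (G : ℂ → ℂ) (hG : DifferentiableOn ℂ G U)
    (hG' : ∀ z ∈ U, deriv G z ≠ 0) {q : ℂ} (hq : q ∈ U) :
    ∃ m > (0:ℝ), ∃ ε > (0:ℝ), ∃ τ : ℂ → ℂ,
      closedBall q m ⊆ U ∧ Set.InjOn G (closedBall q m) ∧
      DifferentiableOn ℂ τ (ball (G q) ε) ∧ τ (G q) = q ∧
      ∀ w ∈ ball (G q) ε, τ w ∈ ball q m ∧ G (τ w) = w := by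
  have hGan : AnalyticOnNhd ℂ G U := hG.analyticOnNhd hUo
  have hstrict : HasStrictDerivAt G (deriv G q) q := by
    have h := (hGan q hq).hasStrictFDerivAt.hasStrictDerivAt
    simpa [fderiv_apply_one_eq_deriv] using h
  set Φ := HasStrictFDerivAt.toOpenPartialHomeomorph (f := G) (hf := hstrict.hasStrictFDerivAt_equiv (hG' q hq)) with hΦ
  have hcoe : (Φ : ℂ → ℂ) = G :=
    HasStrictFDerivAt.toOpenPartialHomeomorph_coe (hf := hstrict.hasStrictFDerivAt_equiv (hG' q hq))
  have hqs : q ∈ Φ.source :=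
    HasStrictFDerivAt.mem_toOpenPartialHomeomorph_source (hf := hstrict.hasStrictFDerivAt_equiv (hG' q hq))
  obtain ⟨m, hm0, hmsub⟩ : ∃ m > 0, closedBall q m ⊆ Φ.source ∩ U := by
    have : Φ.source ∩ U ∈ 𝓝 q := (Φ.open_source.inter hUo).mem_nhds ⟨hqs, hq⟩
    rcases Metric.nhds_basis_closedBall.mem_iff.1 this with ⟨m, hm0, hm⟩
    exact ⟨m, hm0, hm⟩
  have hballs : ball q m ⊆ Φ.source := fun x hx => (hmsub (ball_subset_closedBall hx)).1
  have himg : IsOpen (Φ '' ball q m) := Φ.isOpen_image_of_subset_source isOpen_ball hballs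
  have hGq : G q ∈ Φ '' ball q m := by
    refine ⟨q, mem_ball_self hm0, ?_⟩
    rw [hcoe]
  obtain ⟨ε, hε0, hεsub⟩ : ∃ ε > 0, ball (G q) ε ⊆ Φ '' ball q m :=
    Metric.isOpen_iff.1 himg _ hGq |>.imp fun ε h => ⟨h.1, h.2⟩
  refine ⟨m, hm0, ε, hε0, Φ.symm, fun x hx => (hmsub hx).2, ?_, ?_, ?_, ?_⟩
  · have hsub : closedBall q m ⊆ Φ.source := fun z hz => (hmsub hz).1
    have := Φ.injOn.mono hsub
    rwa [hcoe] at this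
  · -- differentiability of Φ.symm on ball (G q) ε
    intro w hw
    obtain ⟨x, hxball, hxw⟩ := hεsub hw
    have hwt : w ∈ Φ.target := by rw [← hxw]; exact Φ.map_source (hballs hxball)
    have hsymm : Φ.symm w = x := by rw [← hxw]; exact Φ.left_inv (hballs hxball)
    have hxU : x ∈ U := (hmsub (ball_subset_closedBall hxball)).2
    have hGx : HasDerivAt G (deriv G x) x :=
      ((hG.differentiableAt (hUo.mem_nhds hxU))).hasDerivAt
    have hΦx : HasDerivAt (Φ : ℂ → ℂ) (deriv G x) (Φ.symm w) := by
      rw [hsymm, hcoe]; exact hGx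
    have := Φ.hasDerivAt_symm hwt (hG' x hxU) hΦx
    exact this.differentiableAt.differentiableWithinAt
  · have : Φ.symm (Φ q) = q := Φ.left_inv hqs
    rw [← hcoe]; exact this
  · intro w hw
    obtain ⟨x, hxball, hxw⟩ := hεsub hw
    have hwt : w ∈ Φ.target := by rw [← hxw]; exact Φ.map_source (hballs hxball)
    have hsymm : Φ.symm w = x := by rw [← hxw]; exact Φ.left_inv (hballs hxball)
    refine ⟨by rw [hsymm]; exact hxball, ?_⟩
    rw [← hcoe]; exact Φ.right_inv hwt

/-- Two continuous sections of `G` agreeing at one point agree on a preconnected open set. -/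
lemma sections_eqOn (U : Set ℂ) (hUo : IsOpen U) (G : ℂ → ℂ) (hG : DifferentiableOn ℂ G U)
    (hG' : ∀ z ∈ U, deriv G z ≠ 0) {V : Set ℂ} (hVo : IsOpen V) (hVc : IsPreconnected V)
    {s₁ s₂ : ℂ → ℂ} (hc₁ : ContinuousOn s₁ V) (hc₂ : ContinuousOn s₂ V)
    (hs₁ : ∀ z ∈ V, s₁ z ∈ U ∧ G (s₁ z) = z) (hs₂ : ∀ z ∈ V, s₂ z ∈ U ∧ G (s₂ z) = z)
    {z₀ : ℂ} (hz₀ : z₀ ∈ V) (hagree : s₁ z₀ = s₂ z₀) : Set.EqOn s₁ s₂ V := by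
  classical
  set A : Set ℂ := {z ∈ V | s₁ z = s₂ z} with hA
  set B : Set ℂ := {z ∈ V | s₁ z ≠ s₂ z} with hB
  have hAopen : IsOpen A := by
    rw [isOpen_iff_mem_nhds]
    rintro z₁ ⟨hz₁V, hz₁⟩
    have hq1 : s₁ z₁ ∈ U := (hs₁ z₁ hz₁V).1
    obtain ⟨m, hm0, ε, hε0, τ, hmU, hinj, -, -, -⟩ := localInv U hUo G hG hG' hq1
    set q := s₁ z₁ with hqdef
    have hN1 : IsOpen (V ∩ s₁ ⁻¹' ball q m) := hc₁.isOpen_inter_preimage hVo isOpen_ball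
    have hN2 : IsOpen (V ∩ s₂ ⁻¹' ball q m) := hc₂.isOpen_inter_preimage hVo isOpen_ball
    have hzmem : z₁ ∈ (V ∩ s₁ ⁻¹' ball q m) ∩ (V ∩ s₂ ⁻¹' ball q m) :=
      ⟨⟨hz₁V, mem_ball_self hm0⟩, ⟨hz₁V, by rw [Set.mem_preimage, ← hz₁]; exact mem_ball_self hm0⟩⟩
    refine Filter.mem_of_superset (((hN1.inter hN2)).mem_nhds hzmem) ?_
    rintro z ⟨⟨hzV, hz1⟩, ⟨-, hz2⟩⟩
    refine ⟨hzV, hinj (ball_subset_closedBall hz1) (ball_subset_closedBall hz2) ?_⟩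
    rw [(hs₁ z hzV).2, (hs₂ z hzV).2]
  have hBopen : IsOpen B := by
    rw [isOpen_iff_mem_nhds]
    rintro z₁ ⟨hz₁V, hz₁⟩
    have h1 : ContinuousAt s₁ z₁ := hc₁.continuousAt (hVo.mem_nhds hz₁V)
    have h2 : ContinuousAt s₂ z₁ := hc₂.continuousAt (hVo.mem_nhds hz₁V)
    have : ∀ᶠ z in 𝓝 z₁, s₁ z ≠ s₂ z := by
      have : ContinuousAt (fun z => s₁ z - s₂ z) z₁ := h1.sub h2
      have hne : s₁ z₁ - s₂ z₁ ≠ 0 := sub_ne_zero.2 hz₁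
      have := this.eventually_ne hne
      filter_upwards [this] with z hz
      exact fun h => hz (by rw [h, sub_self])
    filter_upwards [this, hVo.mem_nhds hz₁V] with z h1' h2'
    exact ⟨h2', h1'⟩
  have hsub : V ⊆ A ∪ B := fun z hz => by
    by_cases h : s₁ z = s₂ z
    · exact Or.inl ⟨hz, h⟩
    · exact Or.inr ⟨hz, h⟩
  have hdisj : Disjoint A B := by
    rw [Set.disjoint_iff]
    rintro z ⟨⟨-, h1⟩, ⟨-, h2⟩⟩
    exact h2 h1
  rcases hVc.subset_or_subset hAopen hBopen hdisj hsub with h | h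
  · intro z hz; exact (h hz).2
  · exact ((h hz₀).2 hagree).elim

def Sect (U : Set ℂ) (G : ℂ → ℂ) (p : ℂ) (σ : ℂ → ℂ) (R : ℝ) : Prop :=
  DifferentiableOn ℂ σ (Metric.ball (G p) R) ∧ σ (G p) = p ∧
    ∀ w ∈ Metric.ball (G p) R, σ w ∈ U ∧ G (σ w) = w

/-- Boundary extension: near every boundary point of a maximal section ball there is a
local section agreeing with `σ` on the overlap.  Uses completeness. -/
lemma boundary_ext (U : Set ℂ) (hUo : IsOpen U) (F G : ℂ → ℂ)
    (hF : DifferentiableOn ℂ F U) (hG : DifferentiableOn ℂ G U)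
    (hlt : ∀ z ∈ U, ‖deriv F z‖ < ‖deriv G z‖)
    (hcomp : MetricComplete U
      (fun z => Real.sqrt (‖deriv G z‖ ^ 2 - ‖deriv F z‖ ^ 2)))
    {p : ℂ} (hp : p ∈ U) {R : ℝ} (hR : 0 < R) {σ : ℂ → ℂ} (hσ : Sect U G p σ R)
    {w : ℂ} (hw : w ∈ sphere (G p) R) :
    ∃ ε > (0:ℝ), ∃ τ : ℂ → ℂ, DifferentiableOn ℂ τ (ball w ε) ∧
      (∀ z ∈ ball w ε, τ z ∈ U ∧ G (τ z) = z) ∧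
      Set.EqOn σ τ (ball w ε ∩ ball (G p) R) := by
  have hG' : ∀ z ∈ U, deriv G z ≠ 0 := fun z hz =>
    norm_pos_iff.1 ((norm_nonneg _).trans_lt (hlt z hz))
  obtain ⟨hσd, hσp, hσs⟩ := hσ
  have hσc : ContinuousOn σ (ball (G p) R) := hσd.continuousOn
  set lam : ℂ → ℝ := fun z => Real.sqrt (‖deriv G z‖ ^ 2 - ‖deriv F z‖ ^ 2) with hlam
  have hwR : dist w (G p) = R := mem_sphere.mp hw
  set ℓ : ℝ → ℂ := fun t => G p + t • (w - G p) with hℓ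
  have hℓcont : Continuous ℓ := by fun_prop
  have hℓmem : ∀ t : ℝ, 0 ≤ t → t < 1 → ℓ t ∈ ball (G p) R := by
    intro t ht0 ht1
    have : dist (ℓ t) (G p) = t * R := by
      rw [dist_eq_norm, hℓ]
      simp only [add_sub_cancel_left, norm_smul, Real.norm_eq_abs, abs_of_nonneg ht0]
      rw [← dist_eq_norm, hwR]
    rw [mem_ball, this]
    calc t * R < 1 * R := by exact mul_lt_mul_of_pos_right ht1 hR
    _ = R := one_mul R
  set γ : ℝ → ℂ := fun t => σ (ℓ t) with hγ
  have hℓdiff : ∀ t : ℝ, HasDerivAt ℓ (w - G p) t := by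
    intro t
    have h1 : HasDerivAt (fun s : ℝ => s • (w - G p)) ((1:ℝ) • (w - G p)) t :=
      (hasDerivAt_id t).smul_const (w - G p)
    have := h1.const_add (G p); rw [one_smul] at this; exact this
  have hγd : ∀ t : ℝ, 0 ≤ t → t < 1 →
      HasDerivAt γ ((w - G p) • deriv σ (ℓ t)) t := by
    intro t ht0 ht1
    have hσat : DifferentiableAt ℂ σ (ℓ t) :=
      hσd.differentiableAt (isOpen_ball.mem_nhds (hℓmem t ht0 ht1))
    exact (hσat.hasDerivAt).scomp t (hℓdiff t)
  have hkey : ∀ t : ℝ, 0 ≤ t → t < 1 →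
      deriv G (γ t) * deriv σ (ℓ t) = 1 := by
    intro t ht0 ht1
    have hmem := hℓmem t ht0 ht1
    have hσat : DifferentiableAt ℂ σ (ℓ t) :=
      hσd.differentiableAt (isOpen_ball.mem_nhds hmem)
    have hγU : σ (ℓ t) ∈ U := (hσs _ hmem).1
    have hGat : DifferentiableAt ℂ G (σ (ℓ t)) := hG.differentiableAt (hUo.mem_nhds hγU)
    have hcomp' : HasDerivAt (fun z => G (σ z)) (deriv G (σ (ℓ t)) * deriv σ (ℓ t)) (ℓ t) :=
      (hGat.hasDerivAt).comp (ℓ t) hσat.hasDerivAt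
    have hev : (fun z => G (σ z)) =ᶠ[𝓝 (ℓ t)] id := by
      filter_upwards [isOpen_ball.mem_nhds hmem] with z hz
      exact (hσs z hz).2
    have hid : HasDerivAt (id : ℂ → ℂ) (deriv G (σ (ℓ t)) * deriv σ (ℓ t)) (ℓ t) :=
      hcomp'.congr_of_eventuallyEq hev.symm
    have := (hasDerivAt_id (ℓ t)).unique hid
    exact this.symm
  -- length bound
  have hlen : curveLength lam γ ≤ ENNReal.ofReal R := by
    have hmono : ∀ t ∈ Ioo (0:ℝ) 1,
        ENNReal.ofReal (lam (γ t) * ‖deriv γ t‖) ≤ ENNReal.ofReal R := by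
      intro t ht
      apply ENNReal.ofReal_le_ofReal
      have hd : deriv γ t = (w - G p) • deriv σ (ℓ t) := (hγd t ht.1.le ht.2).deriv
      have hγU : γ t ∈ U := (hσs _ (hℓmem t ht.1.le ht.2)).1
      have hlam_le : lam (γ t) ≤ ‖deriv G (γ t)‖ := by
        rw [hlam]
        calc Real.sqrt (‖deriv G (γ t)‖ ^ 2 - ‖deriv F (γ t)‖ ^ 2)
            ≤ Real.sqrt (‖deriv G (γ t)‖ ^ 2) :=
              Real.sqrt_le_sqrt (by nlinarith [sq_nonneg ‖deriv F (γ t)‖])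
          _ = ‖deriv G (γ t)‖ := by
              rw [Real.sqrt_sq (norm_nonneg _)]
      have : ‖deriv γ t‖ = ‖w - G p‖ * ‖deriv σ (ℓ t)‖ := by
        rw [hd, norm_smul]
      rw [this]
      have hnorm1 : ‖deriv G (γ t)‖ * ‖deriv σ (ℓ t)‖ = 1 := by
        rw [← norm_mul, hkey t ht.1.le ht.2, norm_one]
      have hwnorm : ‖w - G p‖ = R := by rw [← dist_eq_norm, hwR]
      calc lam (γ t) * (‖w - G p‖ * ‖deriv σ (ℓ t)‖)
          ≤ ‖deriv G (γ t)‖ * (‖w - G p‖ * ‖deriv σ (ℓ t)‖) := by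
            apply mul_le_mul_of_nonneg_right hlam_le
            positivity
        _ = ‖w - G p‖ * (‖deriv G (γ t)‖ * ‖deriv σ (ℓ t)‖) := by ring
        _ = R := by rw [hnorm1, hwnorm, mul_one]
    calc curveLength lam γ
        ≤ ∫⁻ _ in Ioo (0:ℝ) 1, ENNReal.ofReal R := by
          apply setLIntegral_mono measurable_const hmono
      _ = ENNReal.ofReal R * volume (Ioo (0:ℝ) 1) := setLIntegral_const _ _
      _ = ENNReal.ofReal R := by simp [Real.volume_Ioo]
  -- γ is a piecewise C¹ curve in U
  have hpc1 : PiecewiseC1 γ := by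
    refine ⟨?_, ∅, countable_empty, ?_⟩
    · exact hσc.comp hℓcont.continuousOn (fun t ht => hℓmem t ht.1 ht.2)
    · intro t ht
      exact (hγd t ht.1.1 ht.1.2).differentiableAt
  have hmem : ∀ t ∈ Ico (0:ℝ) 1, γ t ∈ U := fun t ht => (hσs _ (hℓmem t ht.1 ht.2)).1
  -- not divergent
  have hnotdiv : ¬ (∀ K : Set ℂ, K ⊆ U → IsCompact K →
      ∃ t₀ ∈ Set.Ico (0:ℝ) 1, ∀ t, t₀ ≤ t → t < 1 → γ t ∉ K) := by
    intro hdiv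
    have := hcomp γ ⟨hpc1, hmem, hdiv⟩
    rw [this] at hlen
    exact ENNReal.ofReal_ne_top (top_le_iff.1 hlen)
  push_neg at hnotdiv
  obtain ⟨K, hKU, hKc, hfreq⟩ := hnotdiv
  -- a sequence approaching the boundary point inside K
  have h1n : ∀ n : ℕ, (1 - 1/(n+1) : ℝ) ∈ Ico (0:ℝ) 1 := by
    intro n
    constructor
    · have : (1:ℝ)/(n+1) ≤ 1 := by
        rw [div_le_one (by positivity)]
        linarith [Nat.cast_nonneg (α := ℝ) n]
      linarith
    · have : (0:ℝ) < 1/(n+1) := by positivity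
      linarith
  choose u hu1 hu2 hu3 using fun n : ℕ => hfreq (1 - 1/((n:ℝ)+1)) (h1n n)
  have huIco : ∀ n, u n ∈ Ico (0:ℝ) 1 := fun n => ⟨(h1n n).1.trans (hu1 n), hu2 n⟩
  have hulim : Tendsto u atTop (𝓝 1) := by
    have hlow : Tendsto (fun n : ℕ => (1 - 1/(n+1) : ℝ)) atTop (𝓝 1) := by
      have : Tendsto (fun n : ℕ => (1 / (n+1) : ℝ)) atTop (𝓝 0) :=
        tendsto_one_div_add_atTop_nhds_zero_nat
      simpa using (tendsto_const_nhds (x := (1:ℝ))).sub this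
    exact tendsto_of_tendsto_of_tendsto_of_le_of_le hlow tendsto_const_nhds
      (fun n => hu1 n) (fun n => (hu2 n).le)
  obtain ⟨q, hqK, φ, hφ, hconv⟩ := hKc.tendsto_subseq (fun n => hu3 n)
  have hqU : q ∈ U := hKU hqK
  -- G q = w
  have hℓu : Tendsto (fun n => ℓ (u (φ n))) atTop (𝓝 w) := by
    have h1 : Tendsto (fun n => u (φ n)) atTop (𝓝 1) := hulim.comp hφ.tendsto_atTop
    have := (hℓcont.tendsto 1).comp h1
    simpa [hℓ, Function.comp_def] using this
  have hGq : G q = w := by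
    have hc1 : Tendsto (fun n => G (γ (u (φ n)))) atTop (𝓝 (G q)) :=
      ((hG.differentiableAt (hUo.mem_nhds hqU)).continuousAt.tendsto).comp hconv
    have heq : ∀ n, G (γ (u (φ n))) = ℓ (u (φ n)) := by
      intro n
      exact (hσs _ (hℓmem _ (huIco (φ n)).1 (huIco (φ n)).2)).2
    rw [funext heq] at hc1
    exact tendsto_nhds_unique hc1 hℓu
  -- local inverse at q
  obtain ⟨m, hm0, ε₀, hε₀, τ, hmU, hinj, hτd, hτq, hτs⟩ := localInv U hUo G hG hG' hqU
  rw [hGq] at hτd hτq hτs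
  -- pick n with both closeness conditions
  have hev1 : ∀ᶠ n in atTop, γ (u (φ n)) ∈ ball q m :=
    hconv (isOpen_ball.mem_nhds (mem_ball_self hm0))
  have hev2 : ∀ᶠ n in atTop, ℓ (u (φ n)) ∈ ball w ε₀ :=
    hℓu (isOpen_ball.mem_nhds (mem_ball_self hε₀))
  obtain ⟨n, hn1, hn2⟩ := (hev1.and hev2).exists
  set z₁ := ℓ (u (φ n)) with hz₁def
  have hz₁ball : z₁ ∈ ball (G p) R := hℓmem _ (huIco (φ n)).1 (huIco (φ n)).2
  have hagree : σ z₁ = τ z₁ := by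
    have h1 : G (σ z₁) = z₁ := (hσs _ hz₁ball).2
    have h2 : G (τ z₁) = z₁ := (hτs _ hn2).2
    exact hinj (ball_subset_closedBall hn1) (ball_subset_closedBall (hτs _ hn2).1)
      (by rw [h1, h2])
  -- conclude with identity on the overlap
  have hVo : IsOpen (ball w ε₀ ∩ ball (G p) R) := isOpen_ball.inter isOpen_ball
  have hVc : IsPreconnected (ball w ε₀ ∩ ball (G p) R) :=
    ((convex_ball _ _).inter (convex_ball _ _)).isPreconnected
  have hτU : ∀ z ∈ ball w ε₀, τ z ∈ U ∧ G (τ z) = z := by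
    intro z hz
    exact ⟨hmU (ball_subset_closedBall (hτs z hz).1), (hτs z hz).2⟩
  have heqon : Set.EqOn σ τ (ball w ε₀ ∩ ball (G p) R) := by
    apply sections_eqOn U hUo G hG hG' hVo hVc
      (hσc.mono (inter_subset_right)) ((hτd.continuousOn).mono (inter_subset_left))
      (fun z hz => hσs z hz.2) (fun z hz => hτU z hz.1)
      (Set.mem_inter hn2 hz₁ball) hagree
  exact ⟨ε₀, hε₀, τ, hτd, hτU, heqon⟩

lemma sect_extend (U : Set ℂ) (hUo : IsOpen U) (F G : ℂ → ℂ)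
    (hF : DifferentiableOn ℂ F U) (hG : DifferentiableOn ℂ G U)
    (hlt : ∀ z ∈ U, ‖deriv F z‖ < ‖deriv G z‖)
    (hcomp : MetricComplete U
      (fun z => Real.sqrt (‖deriv G z‖ ^ 2 - ‖deriv F z‖ ^ 2)))
    {p : ℂ} (hp : p ∈ U) {R : ℝ} (hR : 0 < R) {σ : ℂ → ℂ} (hσ : Sect U G p σ R) :
    ∃ δ > (0:ℝ), ∃ σ' : ℂ → ℂ, Sect U G p σ' (R + δ) := by
  classical
  have hG' : ∀ z ∈ U, deriv G z ≠ 0 := fun z hz =>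
    norm_pos_iff.1 ((norm_nonneg _).trans_lt (hlt z hz))
  obtain ⟨hσd, hσp, hσs⟩ := hσ
  have hbd : ∀ w ∈ sphere (G p) R, ∃ ε > (0:ℝ), ∃ τ : ℂ → ℂ,
      DifferentiableOn ℂ τ (ball w ε) ∧ (∀ z ∈ ball w ε, τ z ∈ U ∧ G (τ z) = z) ∧
      Set.EqOn σ τ (ball w ε ∩ ball (G p) R) :=
    fun w hw => boundary_ext U hUo F G hF hG hlt hcomp hp hR ⟨hσd, hσp, hσs⟩ hw
  choose! ε hε0 τ hτd hτs hτeq using hbd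
  have hcover : ∀ w ∈ sphere (G p) R, ball w (ε w / 2) ∈ 𝓝 w := fun w hw =>
    ball_mem_nhds _ (by have := hε0 w hw; positivity)
  obtain ⟨t, htsub, hcov⟩ :=
    (isCompact_sphere (G p) R).elim_nhds_subcover (fun w => ball w (ε w / 2)) hcover
  have hsphne : (G p + (R:ℂ)) ∈ sphere (G p) R := by
    simp [mem_sphere, dist_eq_norm, abs_of_pos hR]
  obtain ⟨i₀, hi₀t, -⟩ := mem_iUnion₂.1 (hcov hsphne)
  have htne : t.Nonempty := ⟨i₀, hi₀t⟩
  set δ₀ := t.inf' htne ε with hδ₀def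
  have hδ₀pos : 0 < δ₀ := by
    rw [hδ₀def, Finset.lt_inf'_iff]
    exact fun i hi => hε0 i (htsub i hi)
  have hδ₀le : ∀ i ∈ t, δ₀ ≤ ε i := fun i hi => Finset.inf'_le _ hi
  -- local sections with uniform radius δ₀/2
  have hT : ∀ w ∈ sphere (G p) R, ∃ T : ℂ → ℂ,
      DifferentiableOn ℂ T (ball w (δ₀ / 2)) ∧
      (∀ z ∈ ball w (δ₀/2), T z ∈ U ∧ G (T z) = z) ∧
      Set.EqOn σ T (ball w (δ₀/2) ∩ ball (G p) R) := by
    intro w hw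
    obtain ⟨i, hit, hwi⟩ := mem_iUnion₂.1 (hcov hw)
    have hsub : ball w (δ₀ / 2) ⊆ ball i (ε i) := by
      intro y hy
      have h1 : dist y w < δ₀ / 2 := mem_ball.1 hy
      have h2 : dist w i < ε i / 2 := mem_ball.1 hwi
      have h3 := hδ₀le i hit
      rw [mem_ball]
      calc dist y i ≤ dist y w + dist w i := dist_triangle _ _ _
        _ < δ₀/2 + ε i/2 := add_lt_add h1 h2
        _ ≤ ε i := by linarith
    exact ⟨τ i, (hτd i (htsub i hit)).mono hsub, fun z hz => hτs i (htsub i hit) z (hsub hz),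
      (hτeq i (htsub i hit)).mono (inter_subset_inter_left _ hsub)⟩
  choose! T hTd hTs hTeq using hT
  -- pairwise agreement of the uniform local sections
  have hpair : ∀ w₁ ∈ sphere (G p) R, ∀ w₂ ∈ sphere (G p) R, dist w₁ w₂ ≤ δ₀/4 →
      Set.EqOn (T w₁) (T w₂) (ball w₁ (δ₀/2) ∩ ball w₂ (δ₀/2)) := by
    intro w₁ hw₁ w₂ hw₂ hd
    set s : ℝ := min (δ₀ / (8 * R)) (1/2) with hsdef
    have hs0 : 0 < s := lt_min (by positivity) one_half_pos
    set y := G p + ((1 : ℝ) - s) • (w₁ - G p) with hy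
    have hw₁R : dist w₁ (G p) = R := mem_sphere.mp hw₁
    have hw₁n : ‖w₁ - G p‖ = R := by rw [← dist_eq_norm, hw₁R]
    have hyw₁ : dist y w₁ ≤ δ₀ / 8 := by
      have key : y - w₁ = -(s • (w₁ - G p)) := by rw [hy]; module
      rw [dist_eq_norm, key, norm_neg, norm_smul, Real.norm_eq_abs, abs_of_pos hs0, hw₁n]
      calc s * R ≤ (δ₀/(8*R)) * R :=
            mul_le_mul_of_nonneg_right (min_le_left _ _) hR.le
        _ = δ₀/8 := by field_simp
    have hy1 : y ∈ ball w₁ (δ₀/2) := by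
      rw [mem_ball]
      calc dist y w₁ ≤ δ₀/8 := hyw₁
        _ < δ₀/2 := by linarith
    have hy2 : y ∈ ball w₂ (δ₀/2) := by
      rw [mem_ball]
      calc dist y w₂ ≤ dist y w₁ + dist w₁ w₂ := dist_triangle _ _ _
        _ ≤ δ₀/8 + δ₀/4 := add_le_add hyw₁ hd
        _ < δ₀/2 := by linarith
    have hyball : y ∈ ball (G p) R := by
      rw [mem_ball, dist_eq_norm]
      have key : y - G p = ((1:ℝ) - s) • (w₁ - G p) := by rw [hy, add_sub_cancel_left]
      rw [key, norm_smul, Real.norm_eq_abs, hw₁n]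
      have hs1 : s ≤ 1/2 := min_le_right _ _
      rw [abs_of_nonneg (by linarith)]
      nlinarith
    have ha1 : T w₁ y = σ y := (hTeq w₁ hw₁ ⟨hy1, hyball⟩).symm
    have ha2 : T w₂ y = σ y := (hTeq w₂ hw₂ ⟨hy2, hyball⟩).symm
    exact sections_eqOn U hUo G hG hG' (isOpen_ball.inter isOpen_ball)
      (((convex_ball _ _).inter (convex_ball _ _)).isPreconnected)
      ((hTd w₁ hw₁).continuousOn.mono inter_subset_left)
      ((hTd w₂ hw₂).continuousOn.mono inter_subset_right)
      (fun z hz => hTs w₁ hw₁ z hz.1) (fun z hz => hTs w₂ hw₂ z hz.2)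
      (⟨hy1, hy2⟩ : y ∈ ball w₁ (δ₀/2) ∩ ball w₂ (δ₀/2)) (by rw [ha1, ha2])
  -- the glued extension
  set δ := δ₀/8 with hδdef
  have hδpos : 0 < δ := by positivity
  set σ' : ℂ → ℂ := fun z => if dist z (G p) < R then σ z else T (sphProj (G p) R z) z
    with hσ'def
  have hloc : ∀ z₀ ∈ ball (G p) (R + δ), ¬(dist z₀ (G p) < R) → ∃ ρ > (0:ℝ),
      (∀ z ∈ ball z₀ ρ, σ' z = T (sphProj (G p) R z₀) z) ∧
      z₀ ∈ ball (sphProj (G p) R z₀) (δ₀/2) := by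
    intro z₀ hz₀ hge'
    have hge : R ≤ dist z₀ (G p) := not_lt.1 hge'
    have hz₀lt : dist z₀ (G p) < R + δ := mem_ball.1 hz₀
    set w₀ := sphProj (G p) R z₀ with hw₀def
    have hw₀ : w₀ ∈ sphere (G p) R := sphProj_mem hR hge
    have hz₀w₀ : dist z₀ w₀ = dist z₀ (G p) - R := sphProj_dist hR hge
    have hz₀w₀lt : dist z₀ w₀ < δ := by rw [hz₀w₀]; linarith
    set ρ := min δ (R + δ - dist z₀ (G p)) with hρdef
    have hρ0 : 0 < ρ := lt_min hδpos (by linarith)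
    have hρδ : ρ ≤ δ := min_le_left _ _
    refine ⟨ρ, hρ0, ?_, ?_⟩
    · intro z hz
      have hzz₀ : dist z z₀ < ρ := mem_ball.1 hz
      by_cases hcase : dist z (G p) < R
      · have hzw₀ : dist z w₀ < δ₀/2 := by
          calc dist z w₀ ≤ dist z z₀ + dist z₀ w₀ := dist_triangle _ _ _
            _ < ρ + δ := add_lt_add hzz₀ hz₀w₀lt
            _ ≤ δ + δ := by linarith
            _ ≤ δ₀/2 := by rw [hδdef]; linarith
        have : σ' z = σ z := by rw [hσ'def]; simp only [if_pos hcase]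
        rw [this]
        exact hTeq w₀ hw₀ ⟨mem_ball.2 hzw₀, mem_ball.2 hcase⟩
      · have hcge : R ≤ dist z (G p) := not_lt.1 hcase
        set w := sphProj (G p) R z with hwdef
        have hwmem : w ∈ sphere (G p) R := sphProj_mem hR hcge
        have hzG : dist z (G p) < R + 2*δ := by
          calc dist z (G p) ≤ dist z z₀ + dist z₀ (G p) := dist_triangle _ _ _
            _ < ρ + (R + δ) := add_lt_add hzz₀ hz₀lt
            _ ≤ R + 2*δ := by linarith
        have hzw : dist z w < 2*δ := by
          rw [hwdef, sphProj_dist hR hcge]; linarith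
        have hww₀ : dist w w₀ ≤ δ₀/4 := by
          calc dist w w₀ ≤ 2 * dist z z₀ := sphProj_lipschitz hR hcge hge
            _ ≤ 2 * ρ := by linarith
            _ ≤ δ₀/4 := by linarith [hρδ]
        have hz_w : z ∈ ball w (δ₀/2) := by
          rw [mem_ball]
          calc dist z w < 2*δ := hzw
            _ ≤ δ₀/2 := by rw [hδdef]; linarith
        have hz_w₀ : z ∈ ball w₀ (δ₀/2) := by
          rw [mem_ball]
          calc dist z w₀ ≤ dist z w + dist w w₀ := dist_triangle _ _ _
            _ < 2*δ + δ₀/4 := add_lt_add_of_lt_of_le hzw hww₀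
            _ ≤ δ₀/2 := by rw [hδdef]; linarith
        have : σ' z = T w z := by rw [hσ'def]; simp only [if_neg hcase]; rfl
        rw [this]
        exact hpair w hwmem w₀ hw₀ hww₀ ⟨hz_w, hz_w₀⟩
    · rw [mem_ball]
      calc dist z₀ w₀ < δ := hz₀w₀lt
        _ ≤ δ₀/2 := by rw [hδdef]; linarith
  refine ⟨δ, hδpos, σ', ?_, ?_, ?_⟩
  · -- differentiability
    intro z₀ hz₀
    by_cases h : dist z₀ (G p) < R
    · have hev : σ' =ᶠ[𝓝 z₀] σ := by
        filter_upwards [isOpen_ball.mem_nhds (mem_ball.2 h)] with z hz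
        rw [hσ'def]; simp only [if_pos (mem_ball.1 hz)]
      have hat : DifferentiableAt ℂ σ z₀ := hσd.differentiableAt (isOpen_ball.mem_nhds (mem_ball.2 h))
      exact (hev.differentiableAt_iff.2 hat).differentiableWithinAt
    · obtain ⟨ρ, hρ0, hagree, hz₀in⟩ := hloc z₀ hz₀ h
      have hTat : DifferentiableAt ℂ (T (sphProj (G p) R z₀)) z₀ :=
        (hTd _ (sphProj_mem hR (not_lt.1 h))).differentiableAt (isOpen_ball.mem_nhds hz₀in)
      have hev : σ' =ᶠ[𝓝 z₀] T (sphProj (G p) R z₀) := by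
        filter_upwards [ball_mem_nhds z₀ hρ0] with z hz using hagree z hz
      exact (hev.differentiableAt_iff.2 hTat).differentiableWithinAt
  · rw [hσ'def]
    simp only [dist_self, if_pos hR]
    exact hσp
  · intro z hz
    by_cases h : dist z (G p) < R
    · have : σ' z = σ z := by rw [hσ'def]; simp only [if_pos h]
      rw [this]
      exact hσs z (mem_ball.2 h)
    · obtain ⟨ρ, hρ0, hagree, hzin⟩ := hloc z hz h
      have h1 : σ' z = T (sphProj (G p) R z) z := hagree z (mem_ball_self hρ0)
      rw [h1]
      exact hTs _ (sphProj_mem hR (not_lt.1 h)) z hzin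

/-- Sections of `G` through `p` exist over balls of every radius. -/
lemma sect_all (U : Set ℂ) (hUo : IsOpen U) (F G : ℂ → ℂ)
    (hF : DifferentiableOn ℂ F U) (hG : DifferentiableOn ℂ G U)
    (hlt : ∀ z ∈ U, ‖deriv F z‖ < ‖deriv G z‖)
    (hcomp : MetricComplete U
      (fun z => Real.sqrt (‖deriv G z‖ ^ 2 - ‖deriv F z‖ ^ 2)))
    {p : ℂ} (hp : p ∈ U) : ∀ R > (0:ℝ), ∃ σ : ℂ → ℂ, Sect U G p σ R := by
  classical
  have hG' : ∀ z ∈ U, deriv G z ≠ 0 := fun z hz =>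
    norm_pos_iff.1 ((norm_nonneg _).trans_lt (hlt z hz))
  -- base case
  obtain ⟨m, hm0, ε, hε0, τ, hmU, hinj, hτd, hτp, hτs⟩ := localInv U hUo G hG hG' hp
  have hbase : Sect U G p τ ε :=
    ⟨hτd, hτp, fun w hw => ⟨hmU (ball_subset_closedBall (hτs w hw).1), (hτs w hw).2⟩⟩
  set A : Set ℝ := {R | 0 < R ∧ ∃ σ : ℂ → ℂ, Sect U G p σ R} with hA
  have hdown : ∀ R ∈ A, ∀ R' : ℝ, 0 < R' → R' ≤ R → R' ∈ A := by
    rintro R ⟨hR0, σ, hσd, hσp, hσs⟩ R' h0 hle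
    exact ⟨h0, σ, hσd.mono (ball_subset_ball hle), hσp,
      fun w hw => hσs w (ball_subset_ball hle hw)⟩
  have hεA : ε ∈ A := ⟨hε0, τ, hbase⟩
  intro R hR
  by_contra hnot
  have hRB : R ∈ {x : ℝ | 0 < x ∧ x ∉ A} := ⟨hR, fun hx => hnot hx.2⟩
  set B : Set ℝ := {x : ℝ | 0 < x ∧ x ∉ A} with hB
  have hBne : B.Nonempty := ⟨R, hRB⟩
  have hBbd : BddBelow B := ⟨0, fun x hx => hx.1.le⟩
  set r : ℝ := sInf B with hrdef
  have hεle : ∀ b ∈ B, ε ≤ b := by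
    intro b hb
    by_contra hlt'
    exact hb.2 (hdown ε hεA b hb.1 (not_le.1 hlt').le)
  have hrpos : 0 < r := lt_of_lt_of_le hε0 (le_csInf hBne hεle)
  have hlow : ∀ x : ℝ, 0 < x → x < r → x ∈ A := by
    intro x h0 hx
    by_contra hxA
    exact absurd (csInf_le hBbd ⟨h0, hxA⟩) (not_le.2 hx)
  -- choice of sections below r
  set σr : ℝ → ℂ → ℂ := fun x =>
    if h : 0 < x ∧ x < r then Classical.choose (hlow x h.1 h.2).2 else id with hσrdef
  have hσr : ∀ x : ℝ, 0 < x → x < r → Sect U G p (σr x) x := by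
    intro x h0 hx
    rw [hσrdef]
    simp only [dif_pos (⟨h0, hx⟩ : 0 < x ∧ x < r)]
    exact Classical.choose_spec (hlow x h0 hx).2
  -- uniqueness of sections
  have huniq : ∀ (x₁ x₂ : ℝ) (σ₁ σ₂ : ℂ → ℂ), 0 < x₁ → x₁ ≤ x₂ → Sect U G p σ₁ x₁ →
      Sect U G p σ₂ x₂ → Set.EqOn σ₁ σ₂ (ball (G p) x₁) := by
    rintro x₁ x₂ σ₁ σ₂ h0 hle ⟨h1d, h1p, h1s⟩ ⟨h2d, h2p, h2s⟩
    have hsub : ball (G p) x₁ ⊆ ball (G p) x₂ := ball_subset_ball hle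
    exact sections_eqOn U hUo G hG hG' isOpen_ball (convex_ball _ _).isPreconnected
      h1d.continuousOn (h2d.continuousOn.mono hsub) h1s (fun z hz => h2s z (hsub hz))
      (mem_ball_self h0) (by rw [h1p, h2p])
  -- glue to a section at radius r
  set rr : ℂ → ℝ := fun z => (dist z (G p) + r)/2 with hrrdef
  set σs : ℂ → ℂ := fun z => σr (rr z) z with hσsdef
  have hrr1 : ∀ z ∈ ball (G p) r, 0 < rr z ∧ rr z < r ∧ dist z (G p) < rr z := by
    intro z hz
    have h1 : dist z (G p) < r := mem_ball.1 hz
    have h2 : 0 ≤ dist z (G p) := dist_nonneg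
    refine ⟨by rw [hrrdef]; dsimp; linarith, by rw [hrrdef]; dsimp; linarith,
      by rw [hrrdef]; dsimp; linarith⟩
  have hstar : Sect U G p σs r := by
    refine ⟨?_, ?_, ?_⟩
    · intro z₀ hz₀
      obtain ⟨ha, hb, hc⟩ := hrr1 z₀ hz₀
      set ρ := (r - dist z₀ (G p))/4 with hρdef
      have hρ0 : 0 < ρ := by rw [hρdef]; have := mem_ball.1 hz₀; linarith
      have hev : σs =ᶠ[𝓝 z₀] σr (rr z₀) := by
        filter_upwards [ball_mem_nhds z₀ hρ0] with z hz
        have hdz : dist z (G p) < dist z₀ (G p) + ρ :=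
          lt_of_le_of_lt (dist_triangle z z₀ (G p)) (by
            have := mem_ball.1 hz; rw [dist_comm] at this ⊢; linarith [mem_ball.1 hz])
        have hzr : dist z (G p) < r := by rw [hρdef] at hdz; linarith [mem_ball.1 hz₀]
        have hzball : z ∈ ball (G p) r := mem_ball.2 hzr
        obtain ⟨ha', hb', hc'⟩ := hrr1 z hzball
        have hzrr₀ : dist z (G p) < rr z₀ := by
          rw [hrrdef] at *; dsimp at *; rw [hρdef] at hdz; linarith [mem_ball.1 hz₀]
        -- σr (rr z) and σr (rr z₀) agree at z
        by_cases hcmp : rr z ≤ rr z₀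
        · exact huniq (rr z) (rr z₀) _ _ ha' hcmp (hσr _ ha' hb') (hσr _ ha hb)
            (mem_ball.2 hc')
        · exact (huniq (rr z₀) (rr z) _ _ ha (not_le.1 hcmp).le (hσr _ ha hb)
            (hσr _ ha' hb') (mem_ball.2 hzrr₀)).symm
      have hat : DifferentiableAt ℂ (σr (rr z₀)) z₀ :=
        ((hσr _ ha hb).1).differentiableAt (isOpen_ball.mem_nhds (mem_ball.2 hc))
      exact (hev.differentiableAt_iff.2 hat).differentiableWithinAt
    · have hGp : (G p) ∈ ball (G p) r := mem_ball_self hrpos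
      obtain ⟨ha, hb, hc⟩ := hrr1 (G p) hGp
      exact (hσr _ ha hb).2.1
    · intro z hz
      obtain ⟨ha, hb, hc⟩ := hrr1 z hz
      exact (hσr _ ha hb).2.2 z (mem_ball.2 hc)
  -- extend beyond r: contradiction with sInf
  obtain ⟨δ, hδ0, σ', hσ'⟩ := sect_extend U hUo F G hF hG hlt hcomp hp hrpos hstar
  have hrδA : (r + δ) ∈ A := ⟨by linarith, σ', hσ'⟩
  have : r + δ ≤ r := by
    apply le_csInf hBne
    intro b hb
    by_contra hlt'
    exact hb.2 (hdown (r + δ) hrδA b hb.1 (not_le.1 hlt').le)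
  linarith

/-- analytic parametric affine Bernstein theorem. If `|F'| < |G'|` on `U`
and the affine metric `h = (|G'|²-|F'|²)|dz|²` is complete, then `F'/G'` is constant. -/
theorem affine_bernstein (U : Set ℂ) (hUo : IsOpen U) (hUc : IsConnected U)
    (F G : ℂ → ℂ) (hF : DifferentiableOn ℂ F U) (hG : DifferentiableOn ℂ G U)
    (hlt : ∀ z ∈ U, ‖deriv F z‖ < ‖deriv G z‖)
    (hcomp : MetricComplete U
      (fun z => Real.sqrt (‖deriv G z‖ ^ 2 - ‖deriv F z‖ ^ 2))) :
    ∃ c : ℂ, ∀ z ∈ U, deriv F z / deriv G z = c := by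
  classical
  have hG' : ∀ z ∈ U, deriv G z ≠ 0 := fun z hz =>
    norm_pos_iff.1 ((norm_nonneg _).trans_lt (hlt z hz))
  set ν : ℂ → ℂ := fun z => deriv F z / deriv G z with hνdef
  have hdF : AnalyticOnNhd ℂ (deriv F) U := (hF.analyticOnNhd hUo).deriv
  have hdG : AnalyticOnNhd ℂ (deriv G) U := (hG.analyticOnNhd hUo).deriv
  have hνat : ∀ z ∈ U, DifferentiableAt ℂ ν z := fun z hz =>
    ((hdF z hz).differentiableAt).div ((hdG z hz).differentiableAt) (hG' z hz)
  have hνlt : ∀ z ∈ U, ‖ν z‖ < 1 := by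
    intro z hz
    rw [hνdef]
    dsimp only
    rw [norm_div, div_lt_one ((norm_nonneg _).trans_lt (hlt z hz))]
    exact hlt z hz
  -- derivative of ν vanishes everywhere on U
  have hνderiv : ∀ p ∈ U, deriv ν p = 0 := by
    intro p hp
    have hbound : ∀ R > (0:ℝ), ‖deriv ν p‖ ≤ 2 * ‖deriv G p‖ / R := by
      intro R hR
      obtain ⟨σ, hσd, hσp, hσs⟩ := sect_all U hUo F G hF hG hlt hcomp hp R hR
      set f : ℂ → ℂ := fun w => ν (σ w) with hfdef
      have hσat : DifferentiableAt ℂ σ (G p) :=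
        hσd.differentiableAt (isOpen_ball.mem_nhds (mem_ball_self hR))
      have hfd : DifferentiableOn ℂ f (ball (G p) R) := by
        intro w hw
        exact ((hνat _ (hσs w hw).1).comp w
          (hσd.differentiableAt (isOpen_ball.mem_nhds hw))).differentiableWithinAt
      have hmaps : MapsTo f (ball (G p) R) (ball (f (G p)) 2) := by
        intro w hw
        rw [mem_ball, dist_eq_norm]
        have h1 : ‖ν (σ w)‖ < 1 := hνlt _ (hσs w hw).1
        have h2 : ‖ν (σ (G p))‖ < 1 := by
          rw [hσp]; exact hνlt p hp
        calc ‖f w - f (G p)‖ ≤ ‖f w‖ + ‖f (G p)‖ := norm_sub_le _ _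
          _ < 2 := by rw [hfdef]; dsimp only; linarith
      have hschwarz : ‖deriv f (G p)‖ ≤ 2 / R :=
        Complex.norm_deriv_le_div_of_mapsTo_ball hfd (hmaps.mono_right ball_subset_closedBall) hR
      -- chain rule
      have hchain : deriv f (G p) = deriv ν p * deriv σ (G p) := by
        have := deriv_comp (G p) (by rw [hσp] at *; exact hνat p hp) hσat
        rw [hfdef]
        simpa [hσp, Function.comp_def] using this
      -- derivative of σ at G p
      have hkey : deriv G p * deriv σ (G p) = 1 := by
        have hGat : DifferentiableAt ℂ G p := hG.differentiableAt (hUo.mem_nhds hp)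
        have hGat' : HasDerivAt G (deriv G p) (σ (G p)) := by
          rw [hσp]; exact hGat.hasDerivAt
        have hGσ : HasDerivAt (fun z => G (σ z)) (deriv G p * deriv σ (G p)) (G p) :=
          hGat'.comp (G p) (hσat.hasDerivAt)
        have hev : (fun z => G (σ z)) =ᶠ[𝓝 (G p)] id := by
          filter_upwards [isOpen_ball.mem_nhds (mem_ball_self hR)] with z hz
          exact (hσs z hz).2
        have hid : HasDerivAt (id : ℂ → ℂ) (deriv G p * deriv σ (G p)) (G p) :=
          hGσ.congr_of_eventuallyEq hev.symm
        exact ((hasDerivAt_id (G p)).unique hid).symm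
      have hGpos : 0 < ‖deriv G p‖ := (norm_nonneg _).trans_lt (hlt p hp)
      have h1 : ‖deriv G p‖ * ‖deriv σ (G p)‖ = 1 := by
        rw [← norm_mul, hkey, norm_one]
      have h2 : ‖deriv f (G p)‖ * ‖deriv G p‖ = ‖deriv ν p‖ := by
        rw [hchain, norm_mul]
        calc ‖deriv ν p‖ * ‖deriv σ (G p)‖ * ‖deriv G p‖
            = ‖deriv ν p‖ * (‖deriv G p‖ * ‖deriv σ (G p)‖) := by ring
          _ = ‖deriv ν p‖ := by rw [h1, mul_one]
      calc ‖deriv ν p‖ = ‖deriv f (G p)‖ * ‖deriv G p‖ := h2.symm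
        _ ≤ (2/R) * ‖deriv G p‖ :=
            mul_le_mul_of_nonneg_right hschwarz (norm_nonneg _)
        _ = 2 * ‖deriv G p‖ / R := by ring
    by_contra hne
    have hpos : 0 < ‖deriv ν p‖ := norm_pos_iff.2 hne
    set R := (2 * ‖deriv G p‖ + 1) / ‖deriv ν p‖ with hRdef
    have hRpos : 0 < R := by positivity
    have := hbound R hRpos
    rw [hRdef, div_div_eq_mul_div,
      le_div_iff₀ (by positivity : (0:ℝ) < 2 * ‖deriv G p‖ + 1)] at this
    nlinarith [norm_nonneg (deriv G p), hpos]
  -- ν is locally constant, hence constant on the connected set U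
  obtain ⟨p₀, hp₀⟩ := hUc.nonempty
  refine ⟨ν p₀, ?_⟩
  set A : Set ℂ := {z ∈ U | ν z = ν p₀} with hA
  set B : Set ℂ := {z ∈ U | ν z ≠ ν p₀} with hB
  have hlocconst : ∀ z₁ ∈ U, ∀ᶠ z in 𝓝 z₁, ν z = ν z₁ := by
    intro z₁ hz₁
    obtain ⟨ρ, hρ0, hρsub⟩ := Metric.isOpen_iff.1 hUo z₁ hz₁
    filter_upwards [ball_mem_nhds z₁ hρ0] with z hz
    have hmean : ‖ν z - ν z₁‖ ≤ 0 * ‖z - z₁‖ := by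
      apply Convex.norm_image_sub_le_of_norm_hasDerivWithin_le
        (f' := fun _ => (0:ℂ)) ?_ (fun x _ => by simp) (convex_ball _ _)
        (mem_ball_self hρ0) hz
      intro x hx
      have := (hνat x (hρsub hx)).hasDerivAt
      rw [hνderiv x (hρsub hx)] at this
      exact this.hasDerivWithinAt
    have : ‖ν z - ν z₁‖ ≤ 0 := by simpa using hmean
    rw [← sub_eq_zero]
    exact norm_le_zero_iff.1 this
  have hAopen : IsOpen A := by
    rw [isOpen_iff_mem_nhds]
    rintro z₁ ⟨hz₁U, hz₁⟩
    filter_upwards [hlocconst z₁ hz₁U, hUo.mem_nhds hz₁U] with z h1 h2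
    exact ⟨h2, by rw [h1, hz₁]⟩
  have hBopen : IsOpen B := by
    rw [isOpen_iff_mem_nhds]
    rintro z₁ ⟨hz₁U, hz₁⟩
    filter_upwards [hlocconst z₁ hz₁U, hUo.mem_nhds hz₁U] with z h1 h2
    exact ⟨h2, by rw [h1]; exact hz₁⟩
  have hsub : U ⊆ A ∪ B := fun z hz => by
    by_cases h : ν z = ν p₀
    · exact Or.inl ⟨hz, h⟩
    · exact Or.inr ⟨hz, h⟩
  have hdisj : Disjoint A B := by
    rw [Set.disjoint_iff]
    rintro z ⟨⟨-, h1⟩, ⟨-, h2⟩⟩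
    exact h2 h1
  rcases hUc.isPreconnected.subset_or_subset hAopen hBopen hdisj hsub with h | h
  · exact fun z hz => (h hz).2
  · exact absurd rfl ((h hp₀).2)
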